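/- arXiv:2506.10830 — 2 statements merged into one kernel-verified Lean document; each statement's English description precedes it below -/
import Mathlib

section
/- If S is a simple restricted L-module, then there exists s ∈ ℕ such that for all t ≥ s, the actions of d_t and h_t on S are locally nilpotent. -/
/-- Index type for the basis of the deformed Heisenberg–Virasoro algebra `L`:
elements `d m`, `h n` (`m n : ℤ`) and the central element `c`. -/
inductive DHVIdx : Type
  | d : ℤ → DHVIdx
  | h : ℤ → DHVIdx
  | c : DHVIdx

set_option linter.unusedSectionVars false
set_option linter.unusedTactic false

namespace DHVaux

variable {g : Type*} [LieRing g] [LieAlgebra ℂ g]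
variable {S : Type*} [AddCommGroup S] [Module ℂ S] [LieRingModule g S] [LieModule ℂ g S]

/-- basis element of a mode (bool = true means `d`). -/
noncomputable def mB (B : Module.Basis DHVIdx ℂ g) (x : Bool × ℤ) : g :=
  if x.1 then B (DHVIdx.d x.2) else B (DHVIdx.h x.2)

/-- action of a list of modes -/
noncomputable def actM (B : Module.Basis DHVIdx ℂ g) (L : List (Bool × ℤ)) (v : S) : S :=
  L.foldr (fun x w => ⁅mB B x, w⁆) v

noncomputable def actB (B : Module.Basis DHVIdx ℂ g) (L : List DHVIdx) (v : S) : S :=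
  L.foldr (fun i w => ⁅B i, w⁆) v

def sumM (L : List (Bool × ℤ)) : ℤ := (L.map Prod.snd).sum

@[simp] lemma actM_nil (B : Module.Basis DHVIdx ℂ g) (v : S) : actM B [] v = v := rfl
@[simp] lemma actM_cons (B : Module.Basis DHVIdx ℂ g) (x : Bool × ℤ) (L : List (Bool × ℤ)) (v : S) :
    actM B (x :: L) v = ⁅mB B x, actM B L v⁆ := rfl
@[simp] lemma actB_nil (B : Module.Basis DHVIdx ℂ g) (v : S) : actB B [] v = v := rfl
@[simp] lemma actB_cons (B : Module.Basis DHVIdx ℂ g) (i : DHVIdx) (L : List DHVIdx) (v : S) :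
    actB B (i :: L) v = ⁅B i, actB B L v⁆ := rfl

lemma actM_append (B : Module.Basis DHVIdx ℂ g) (L M : List (Bool × ℤ)) (v : S) :
    actM B (L ++ M) v = actM B L (actM B M v) := by
  induction L with
  | nil => rfl
  | cons x L ih => simp [ih]

lemma actB_append (B : Module.Basis DHVIdx ℂ g) (L M : List DHVIdx) (v : S) :
    actB B (L ++ M) v = actB B L (actB B M v) := by
  induction L with
  | nil => rfl
  | cons x L ih => simp [ih]

@[simp] lemma actM_zero (B : Module.Basis DHVIdx ℂ g) (L : List (Bool × ℤ)) :
    actM B L (0 : S) = 0 := by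
  induction L with
  | nil => rfl
  | cons x L ih => simp [ih]

lemma actM_add (B : Module.Basis DHVIdx ℂ g) (L : List (Bool × ℤ)) (u v : S) :
    actM B L (u + v) = actM B L u + actM B L v := by
  induction L with
  | nil => rfl
  | cons x L ih => simp [ih]

lemma actM_smul (B : Module.Basis DHVIdx ℂ g) (L : List (Bool × ℤ)) (a : ℂ) (v : S) :
    actM B L (a • v) = a • actM B L v := by
  induction L with
  | nil => rfl
  | cons x L ih => simp [ih]

lemma sumM_append (L M : List (Bool × ℤ)) : sumM (L ++ M) = sumM L + sumM M := by
  simp [sumM]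

lemma sumM_cons (x : Bool × ℤ) (L : List (Bool × ℤ)) : sumM (x :: L) = x.2 + sumM L := by
  simp [sumM]

/-- coefficients for the swap relation -/
noncomputable def cf1 (x y : Bool × ℤ) : ℂ := if x.1 ∧ y.1 then ((x.2 - y.2 : ℤ) : ℂ) else 0
noncomputable def cf2 (x y : Bool × ℤ) : ℂ :=
  if x.1 ∧ y.1 then ((x.2 - y.2 : ℤ) : ℂ)
  else if x.1 then ((-y.2 : ℤ) : ℂ)
  else if y.1 then ((x.2 : ℤ) : ℂ) else 0
noncomputable def cf3 (x y : Bool × ℤ) : ℂ :=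
  if x.1 ∧ y.1 ∧ x.2 + y.2 = 0 then ((x.2 : ℂ) ^ 3 - (x.2 : ℂ)) / 12 else 0

lemma cf3_eq_zero (x y : Bool × ℤ) (h : ¬ (x.2 + y.2 = 0)) : cf3 x y = 0 := by
  simp [cf3, h]

lemma swap_aux (B : Module.Basis DHVIdx ℂ g)
    (hdd : ∀ m n : ℤ, ⁅B (DHVIdx.d m), B (DHVIdx.d n)⁆ =
      ((m - n : ℤ) : ℂ) • B (DHVIdx.d (m + n)) +
      ((m - n : ℤ) : ℂ) • B (DHVIdx.h (m + n)) +
      (if m + n = 0 then ((m : ℂ) ^ 3 - (m : ℂ)) / 12 else 0) • B DHVIdx.c)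
    (hdh : ∀ m n : ℤ, ⁅B (DHVIdx.d m), B (DHVIdx.h n)⁆ =
      ((-n : ℤ) : ℂ) • B (DHVIdx.h (m + n)))
    (hhh : ∀ m n : ℤ, ⁅B (DHVIdx.h m), B (DHVIdx.h n)⁆ = 0)
    (x y : Bool × ℤ) (v : S) :
    ⁅mB B x, ⁅mB B y, v⁆⁆ = ⁅mB B y, ⁅mB B x, v⁆⁆
      + cf1 x y • ⁅mB B (true, x.2 + y.2), v⁆
      + cf2 x y • ⁅mB B (false, x.2 + y.2), v⁆
      + cf3 x y • ⁅B DHVIdx.c, v⁆ := by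
  obtain ⟨bx, a⟩ := x
  obtain ⟨by', b⟩ := y
  cases bx <;> cases by'
  · -- h h
    simp only [mB, cf1, cf2, cf3] at *
    norm_num
    rw [leibniz_lie, hhh a b]
    simp
  · -- h d
    simp only [mB, cf1, cf2, cf3] at *
    norm_num
    have hbr : ⁅B (DHVIdx.h a), B (DHVIdx.d b)⁆ = ((a : ℤ) : ℂ) • B (DHVIdx.h (a + b)) := by
      rw [← lie_skew (B (DHVIdx.h a)) (B (DHVIdx.d b)), hdh b a, add_comm b a]
      push_cast
      simp [neg_smul]
    rw [leibniz_lie, hbr, smul_lie]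
    push_cast
    abel
  · -- d h
    simp only [mB, cf1, cf2, cf3] at *
    norm_num
    rw [leibniz_lie, hdh a b, smul_lie]
    push_cast
    simp only [neg_smul]
    abel
  · -- d d
    simp only [mB, cf1, cf2, cf3] at *
    norm_num
    rw [leibniz_lie, hdd a b]
    simp only [add_lie, smul_lie]
    push_cast
    by_cases hab : a + b = 0
    · simp only [hab, if_true]
      abel
    · simp only [hab, if_false]
      simp only [zero_smul]
      abel

lemma exists_big (n₀ : ℤ) (L : List (Bool × ℤ)) (h1 : 1 ≤ L.length)
    (h2 : (L.length : ℤ) * n₀ ≤ sumM L) :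
    ∃ A x R, L = A ++ x :: R ∧ n₀ ≤ (x : Bool × ℤ).2 := by
  by_contra hcon
  push_neg at hcon
  have hall : ∀ a ∈ L.map Prod.snd, a ≤ n₀ - 1 := by
    intro a ha
    obtain ⟨x, hxL, hxa⟩ := List.mem_map.mp ha
    obtain ⟨A, R, hAR⟩ := List.append_of_mem hxL
    have := hcon A x R hAR
    omega
  have hsum := List.sum_le_card_nsmul _ _ hall
  rw [List.length_map] at hsum
  have : sumM L ≤ (L.length : ℤ) * (n₀ - 1) := by
    simpa [sumM, mul_comm] using hsum
  have hlen : (1 : ℤ) ≤ (L.length : ℤ) := by exact_mod_cast h1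
  nlinarith

lemma c_comm (B : Module.Basis DHVIdx ℂ g) (hcen : ∀ x : g, ⁅x, B DHVIdx.c⁆ = 0)
    (x : g) (v : S) : ⁅x, ⁅B DHVIdx.c, v⁆⁆ = ⁅B DHVIdx.c, ⁅x, v⁆⁆ := by
  rw [leibniz_lie, hcen x, zero_lie, zero_add]

lemma c_comm_actM (B : Module.Basis DHVIdx ℂ g) (hcen : ∀ x : g, ⁅x, B DHVIdx.c⁆ = 0)
    (L : List (Bool × ℤ)) (v : S) :
    actM B L ⁅B DHVIdx.c, v⁆ = ⁅B DHVIdx.c, actM B L v⁆ := by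
  induction L with
  | nil => rfl
  | cons x L ih => simp [ih, c_comm B hcen]

/-- Core vanishing lemma: a product of `d`/`h` modes, whose index-sum is at least
`length * n₀`, annihilates a vector killed by all modes of index `≥ n₀`. -/
lemma core (B : Module.Basis DHVIdx ℂ g)
    (hdd : ∀ m n : ℤ, ⁅B (DHVIdx.d m), B (DHVIdx.d n)⁆ =
      ((m - n : ℤ) : ℂ) • B (DHVIdx.d (m + n)) +
      ((m - n : ℤ) : ℂ) • B (DHVIdx.h (m + n)) +
      (if m + n = 0 then ((m : ℂ) ^ 3 - (m : ℂ)) / 12 else 0) • B DHVIdx.c)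
    (hdh : ∀ m n : ℤ, ⁅B (DHVIdx.d m), B (DHVIdx.h n)⁆ =
      ((-n : ℤ) : ℂ) • B (DHVIdx.h (m + n)))
    (hhh : ∀ m n : ℤ, ⁅B (DHVIdx.h m), B (DHVIdx.h n)⁆ = 0)
    (hcen : ∀ x : g, ⁅x, B DHVIdx.c⁆ = 0)
    (n₀ : ℤ) (hn₀ : 1 ≤ n₀) (w : S)
    (hw : ∀ i : ℤ, n₀ ≤ i → ⁅B (DHVIdx.d i), w⁆ = 0 ∧ ⁅B (DHVIdx.h i), w⁆ = 0) :
    ∀ ℓ : ℕ, ∀ L : List (Bool × ℤ), L.length ≤ ℓ → 1 ≤ L.length →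
      (L.length : ℤ) * n₀ ≤ sumM L → actM B L w = 0 := by
  intro ℓ
  induction ℓ with
  | zero => intro L h1 h2 _; exact absurd (h2.trans h1) (by omega)
  | succ N ihN =>
    -- inner claim: handle a list with a designated big element at distance r from the end
    have inner : ∀ r : ℕ, ∀ A : List (Bool × ℤ), ∀ x : Bool × ℤ, ∀ R : List (Bool × ℤ),
        R.length = r → n₀ ≤ x.2 → (A ++ x :: R).length ≤ N + 1 →
        ((A ++ x :: R).length : ℤ) * n₀ ≤ sumM (A ++ x :: R) →
        actM B (A ++ x :: R) w = 0 := by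
      intro r
      induction r with
      | zero =>
        intro A x R hR hx _ _
        have hRnil : R = [] := List.length_eq_zero_iff.mp hR
        subst hRnil
        rw [actM_append]
        have : actM B [x] w = 0 := by
          obtain ⟨bx, a⟩ := x
          cases bx
          · simpa [mB] using (hw a hx).2
          · simpa [mB] using (hw a hx).1
        rw [this, actM_zero]
      | succ r ihr =>
        intro A x R hR hx hlen hsum
        obtain ⟨y, R', rfl⟩ : ∃ y R', R = y :: R' := by
          cases R with
          | nil => simp at hR
          | cons y R' => exact ⟨y, R', rfl⟩
        have hR' : R'.length = r := by simpa using hR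
        -- rewrite using swap_aux
        have key : actM B (A ++ x :: y :: R') w
            = actM B (A ++ y :: x :: R') w
              + cf1 x y • actM B (A ++ (true, x.2 + y.2) :: R') w
              + cf2 x y • actM B (A ++ (false, x.2 + y.2) :: R') w
              + cf3 x y • ⁅B DHVIdx.c, actM B (A ++ R') w⁆ := by
          rw [actM_append, actM_append, actM_append, actM_append]
          simp only [actM_cons]
          rw [swap_aux B hdd hdh hhh x y (actM B R' w)]
          rw [actM_add, actM_add, actM_add, actM_smul, actM_smul, actM_smul,
            c_comm_actM B hcen, actM_append B A R']
        have hlen' : (A ++ x :: y :: R').length = A.length + 2 + R'.length := by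
          simp; omega
        have hsum' : sumM (A ++ x :: y :: R') = sumM A + x.2 + y.2 + sumM R' := by
          rw [sumM_append, sumM_cons, sumM_cons]; ring
        -- term 1 : inner induction
        have t1 : actM B (A ++ y :: x :: R') w = 0 := by
          have hinner := ihr (A ++ [y]) x R' hR' hx
          simp only [List.append_assoc, List.singleton_append] at hinner
          apply hinner
          · simp at hlen ⊢; omega
          · have e1 : sumM (A ++ y :: x :: R') = sumM (A ++ x :: y :: R') := by
              rw [hsum', sumM_append, sumM_cons, sumM_cons]; ring
            have e2 : (A ++ y :: x :: R').length = (A ++ x :: y :: R').length := by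
              simp
            rw [e1, e2]; exact hsum
        -- terms 2,3 : outer induction, length decreased by one
        have t23 : ∀ b : Bool, actM B (A ++ (b, x.2 + y.2) :: R') w = 0 := by
          intro b
          apply ihN
          · simp at hlen ⊢; omega
          · simp only [List.length_append, List.length_cons]; omega
          · have h1 : sumM (A ++ (b, x.2 + y.2) :: R') = sumM (A ++ x :: y :: R') := by
              rw [sumM_append, sumM_cons, hsum']; ring
            have h2 : ((A ++ (b, x.2 + y.2) :: R').length : ℤ)
                = ((A ++ x :: y :: R').length : ℤ) - 1 := by
              simp; push_cast; ring
            rw [h1, h2, sub_mul, one_mul]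
            linarith [hsum, hn₀]
        -- term 4
        have t4 : cf3 x y • ⁅B DHVIdx.c, actM B (A ++ R') w⁆ = 0 := by
          by_cases hxy : x.2 + y.2 = 0
          · -- then the remaining list is strictly shorter by 2 and has the same sum
            have hne : 1 ≤ (A ++ R').length := by
              by_contra hc
              simp only [List.length_append, not_le, Nat.lt_one_iff,
                Nat.add_eq_zero] at hc
              have hA : A = [] := List.length_eq_zero_iff.mp hc.1
              have hRn : R' = [] := List.length_eq_zero_iff.mp hc.2
              subst hA; subst hRn
              have hs : sumM (([] : List (Bool × ℤ)) ++ x :: y :: []) = x.2 + y.2 := by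
                simp [sumM]
              have hl : ((([] : List (Bool × ℤ)) ++ x :: y :: []).length : ℤ) = 2 := by
                simp
              rw [hs, hl] at hsum
              omega
            have : actM B (A ++ R') w = 0 := by
              apply ihN
              · simp at hlen ⊢; omega
              · exact hne
              · have h1 : sumM (A ++ R') = sumM (A ++ x :: y :: R') := by
                  rw [sumM_append, hsum']; omega
                have h2 : ((A ++ R').length : ℤ) = ((A ++ x :: y :: R').length : ℤ) - 2 := by
                  simp; push_cast; ring
                rw [h1, h2, sub_mul]
                have h3 : (1:ℤ) * n₀ ≤ 2 * n₀ := by linarith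
                linarith [hsum, hn₀]
            rw [this, lie_zero, smul_zero]
          · rw [cf3_eq_zero x y hxy, zero_smul]
        rw [key, t1, t23 true, t23 false, t4]
        simp
    -- main step: find a big element
    intro L hℓ h1 hsum
    obtain ⟨A, x, R, rfl, hx⟩ := exists_big n₀ L h1 hsum
    exact inner R.length A x R rfl hx hℓ hsum

def val : DHVIdx → ℤ
  | DHVIdx.d a => a
  | DHVIdx.h a => a
  | DHVIdx.c => 0

lemma c_iter_comm (B : Module.Basis DHVIdx ℂ g) (hcen : ∀ x : g, ⁅x, B DHVIdx.c⁆ = 0)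
    (x : g) (p : ℕ) (v : S) :
    ⁅x, (fun u : S => ⁅B DHVIdx.c, u⁆)^[p] v⁆
      = (fun u : S => ⁅B DHVIdx.c, u⁆)^[p] ⁅x, v⁆ := by
  induction p generalizing v with
  | zero => rfl
  | succ p ih =>
    simp only [Function.iterate_succ', Function.comp_apply]
    rw [c_comm B hcen, ih]

lemma actB_c_iter (B : Module.Basis DHVIdx ℂ g) (hcen : ∀ x : g, ⁅x, B DHVIdx.c⁆ = 0)
    (M : List DHVIdx) (p : ℕ) (v : S) :
    actB B M ((fun u : S => ⁅B DHVIdx.c, u⁆)^[p] v)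
      = (fun u : S => ⁅B DHVIdx.c, u⁆)^[p] (actB B M v) := by
  induction M with
  | nil => rfl
  | cons i M ih => simp only [actB_cons, ih, c_iter_comm B hcen]

lemma strip (B : Module.Basis DHVIdx ℂ g) (hcen : ∀ x : g, ⁅x, B DHVIdx.c⁆ = 0) :
    ∀ L : List DHVIdx, ∃ (p : ℕ) (L' : List (Bool × ℤ)),
      L'.length ≤ L.length ∧ sumM L' = (L.map val).sum ∧
      ∀ v : S, actB B L v = (fun u : S => ⁅B DHVIdx.c, u⁆)^[p] (actM B L' v) := by
  intro L
  induction L with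
  | nil => exact ⟨0, [], by simp, by simp [sumM], fun v => rfl⟩
  | cons i L ih =>
    obtain ⟨p, L', h1, h2, h3⟩ := ih
    cases i with
    | d a =>
      refine ⟨p, (true, a) :: L', by simp; omega, by simp [sumM_cons, h2, val], fun v => ?_⟩
      rw [actB_cons, h3 v, c_iter_comm B hcen]
      congr 1
    | h a =>
      refine ⟨p, (false, a) :: L', by simp; omega, by simp [sumM_cons, h2, val], fun v => ?_⟩
      rw [actB_cons, h3 v, c_iter_comm B hcen]
      congr 1
    | c =>
      refine ⟨p + 1, L', by simp; omega, by simp [h2, val], fun v => ?_⟩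
      rw [actB_cons, h3 v, Function.iterate_succ', Function.comp_apply]

lemma iter_replicate (B : Module.Basis DHVIdx ℂ g) (i : DHVIdx) (k : ℕ) (v : S) :
    (fun w : S => ⁅B i, w⁆)^[k] v = actB B (List.replicate k i) v := by
  induction k with
  | zero => rfl
  | succ k ih =>
    rw [Function.iterate_succ', Function.comp_apply, ih, List.replicate_succ, actB_cons]

lemma actB_repl_d (B : Module.Basis DHVIdx ℂ g) (t : ℤ) (k : ℕ) (v : S) :
    actB B (List.replicate k (DHVIdx.d t)) v = actM B (List.replicate k (true, t)) v := by
  induction k with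
  | zero => rfl
  | succ k ih => simp only [List.replicate_succ, actB_cons, actM_cons, ih, mB]; rfl

lemma actB_repl_h (B : Module.Basis DHVIdx ℂ g) (t : ℤ) (k : ℕ) (v : S) :
    actB B (List.replicate k (DHVIdx.h t)) v = actM B (List.replicate k (false, t)) v := by
  induction k with
  | zero => rfl
  | succ k ih => simp only [List.replicate_succ, actB_cons, actM_cons, ih, mB]; rfl

lemma sumM_replicate (x : Bool × ℤ) (k : ℕ) : sumM (List.replicate k x) = k * x.2 := by
  simp [sumM, List.map_replicate, List.sum_replicate, nsmul_eq_mul]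

/-- For `t ≥ n₀ + 1`, a high enough power of `d_t` (or `h_t`) kills any monomial
applied to a vector killed by all modes of index `≥ n₀`. -/
lemma main_nilp (B : Module.Basis DHVIdx ℂ g)
    (hdd : ∀ m n : ℤ, ⁅B (DHVIdx.d m), B (DHVIdx.d n)⁆ =
      ((m - n : ℤ) : ℂ) • B (DHVIdx.d (m + n)) +
      ((m - n : ℤ) : ℂ) • B (DHVIdx.h (m + n)) +
      (if m + n = 0 then ((m : ℂ) ^ 3 - (m : ℂ)) / 12 else 0) • B DHVIdx.c)
    (hdh : ∀ m n : ℤ, ⁅B (DHVIdx.d m), B (DHVIdx.h n)⁆ =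
      ((-n : ℤ) : ℂ) • B (DHVIdx.h (m + n)))
    (hhh : ∀ m n : ℤ, ⁅B (DHVIdx.h m), B (DHVIdx.h n)⁆ = 0)
    (hcen : ∀ x : g, ⁅x, B DHVIdx.c⁆ = 0)
    (n₀ : ℤ) (hn₀ : 1 ≤ n₀) (w : S)
    (hw : ∀ i : ℤ, n₀ ≤ i → ⁅B (DHVIdx.d i), w⁆ = 0 ∧ ⁅B (DHVIdx.h i), w⁆ = 0)
    (t : ℤ) (ht : n₀ + 1 ≤ t) (L : List DHVIdx) (b : Bool) :
    ∃ k : ℕ, (fun u : S => ⁅B (if b then DHVIdx.d t else DHVIdx.h t), u⁆)^[k]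
      (actB B L w) = 0 := by
  obtain ⟨p, L', hlen, hsum, hact⟩ := strip (S := S) B hcen L
  set k : ℕ := 1 + ((L'.length : ℤ) * n₀ - sumM L').toNat with hk
  refine ⟨k, ?_⟩
  rw [iter_replicate, hact, actB_c_iter B hcen]
  have hrepl : actB B (List.replicate k (if b then DHVIdx.d t else DHVIdx.h t))
      (actM B L' w) = actM B (List.replicate k (b, t) ++ L') w := by
    rw [actM_append]
    cases b
    · exact actB_repl_h B t k _
    · exact actB_repl_d B t k _
  rw [hrepl]
  have hzero : actM B (List.replicate k (b, t) ++ L') w = 0 := by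
    refine core B hdd hdh hhh hcen n₀ hn₀ w hw (k + L'.length)
      (List.replicate k (b, t) ++ L') (by simp) (by simp; omega) ?_
    · -- sum condition
      rw [sumM_append, sumM_replicate]
      have hk1 : ((L'.length : ℤ) * n₀ - sumM L') ≤ (k : ℤ) := by
        have h2 := Int.self_le_toNat ((L'.length : ℤ) * n₀ - sumM L')
        rw [hk]; push_cast; omega
      have hkpos : (1 : ℤ) ≤ (k : ℤ) := by rw [hk]; push_cast; omega
      have hmul : (k : ℤ) * (n₀ + 1) ≤ (k : ℤ) * t :=
        mul_le_mul_of_nonneg_left ht (by positivity)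
      have hlength : ((List.replicate k (b, t) ++ L').length : ℤ)
          = (k : ℤ) + (L'.length : ℤ) := by simp
      rw [hlength]
      nlinarith [hmul, hk1]
  rw [hzero]
  exact Function.iterate_fixed (by simp) p

lemma iter_lie_add (x : g) (k : ℕ) (u v : S) :
    (fun w : S => ⁅x, w⁆)^[k] (u + v)
      = (fun w : S => ⁅x, w⁆)^[k] u + (fun w : S => ⁅x, w⁆)^[k] v := by
  induction k generalizing u v with
  | zero => rfl
  | succ k ih => simp only [Function.iterate_succ', Function.comp_apply, ih, lie_add]

lemma iter_lie_smul (x : g) (k : ℕ) (a : ℂ) (v : S) :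
    (fun w : S => ⁅x, w⁆)^[k] (a • v) = a • (fun w : S => ⁅x, w⁆)^[k] v := by
  induction k generalizing v with
  | zero => rfl
  | succ k ih => simp only [Function.iterate_succ', Function.comp_apply, ih, lie_smul]

lemma iter_lie_zero (x : g) (k : ℕ) : (fun w : S => ⁅x, w⁆)^[k] (0 : S) = 0 :=
  Function.iterate_fixed (lie_zero x) k

lemma iter_lie_stable (x : g) (u : S) (k j : ℕ) (h : (fun w : S => ⁅x, w⁆)^[k] u = 0)
    (hj : k ≤ j) : (fun w : S => ⁅x, w⁆)^[j] u = 0 := by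
  have : j = (j - k) + k := by omega
  rw [this, Function.iterate_add_apply, h, iter_lie_zero]

end DHVaux

/-- Every simple restricted `L`-module has the property that, for all
sufficiently large `t`, the actions of `d_t` and `h_t` are locally nilpotent. -/
theorem dhv_restricted_locally_nilpotent
 {g : Type*} [LieRing g] [LieAlgebra ℂ g]
    (B : Module.Basis DHVIdx ℂ g)
    (hdd : ∀ m n : ℤ, ⁅B (DHVIdx.d m), B (DHVIdx.d n)⁆ =
      ((m - n : ℤ) : ℂ) • B (DHVIdx.d (m + n)) +
      ((m - n : ℤ) : ℂ) • B (DHVIdx.h (m + n)) +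
      (if m + n = 0 then ((m : ℂ) ^ 3 - (m : ℂ)) / 12 else 0) • B DHVIdx.c)
    (hdh : ∀ m n : ℤ, ⁅B (DHVIdx.d m), B (DHVIdx.h n)⁆ =
      ((-n : ℤ) : ℂ) • B (DHVIdx.h (m + n)))
    (hhh : ∀ m n : ℤ, ⁅B (DHVIdx.h m), B (DHVIdx.h n)⁆ = 0)
    (hcen : ∀ x : g, ⁅x, B DHVIdx.c⁆ = 0)
    (S : Type*) [AddCommGroup S] [Module ℂ S] [LieRingModule g S]
    [LieModule ℂ g S]
    (hsimple : ∀ N : LieSubmodule ℂ g S, N = ⊥ ∨ N = ⊤) (hnt : Nontrivial S)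
    (hres : ∀ s : S, ∃ n : ℕ, ∀ i : ℤ, (n : ℤ) ≤ i →
      ⁅B (DHVIdx.d i), s⁆ = 0 ∧ ⁅B (DHVIdx.h i), s⁆ = 0) :
    ∃ s₀ : ℕ, ∀ t : ℤ, (s₀ : ℤ) ≤ t → ∀ m : S,
      (∃ n : ℕ, (fun w : S => ⁅B (DHVIdx.d t), w⁆)^[n] m = 0) ∧
      (∃ n : ℕ, (fun w : S => ⁅B (DHVIdx.h t), w⁆)^[n] m = 0) := by
  classical
  obtain ⟨w, hw0⟩ := exists_ne (0 : S)
  obtain ⟨nw, hnw⟩ := hres w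
  set n₀ : ℤ := max (nw : ℤ) 1 with hn₀def
  have hn₀ : 1 ≤ n₀ := le_max_right _ _
  have hw' : ∀ i : ℤ, n₀ ≤ i → ⁅B (DHVIdx.d i), w⁆ = 0 ∧ ⁅B (DHVIdx.h i), w⁆ = 0 := by
    intro i hi
    exact hnw i (le_trans (le_max_left _ _) hi)
  set Mon : Set S := {v | ∃ L : List DHVIdx, DHVaux.actB B L w = v} with hMonDef
  have hlie_mem : ∀ {x : g} {m : S}, m ∈ Submodule.span ℂ Mon →
      ⁅x, m⁆ ∈ Submodule.span ℂ Mon := by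
    intro x m hm
    have main : ∀ (v : S), v ∈ Submodule.span ℂ Mon → ∀ y : g,
        ⁅y, v⁆ ∈ Submodule.span ℂ Mon := by
      intro v hv
      induction hv using Submodule.span_induction with
      | mem v hvm =>
        obtain ⟨L, rfl⟩ := hvm
        intro y
        have hy : y ∈ Submodule.span ℂ (Set.range ⇑B) := by
          rw [B.span_eq]; trivial
        induction hy using Submodule.span_induction with
        | mem z hz =>
          obtain ⟨i, rfl⟩ := hz
          exact Submodule.subset_span ⟨i :: L, rfl⟩
        | zero => rw [zero_lie]; exact Submodule.zero_mem _
        | add a b _ _ ha hb => rw [add_lie]; exact Submodule.add_mem _ ha hb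
        | smul a z _ hz => rw [smul_lie]; exact Submodule.smul_mem _ a hz
      | zero => intro y; rw [lie_zero]; exact Submodule.zero_mem _
      | add a b _ _ ha hb =>
        intro y; rw [lie_add]; exact Submodule.add_mem _ (ha y) (hb y)
      | smul a z _ hz =>
        intro y; rw [lie_smul]; exact Submodule.smul_mem _ a (hz y)
    exact main m hm x
  let N : LieSubmodule ℂ g S :=
    { toSubmodule := Submodule.span ℂ Mon
      lie_mem := fun {x m} hm => hlie_mem hm }
  have hwN : w ∈ N := Submodule.subset_span ⟨[], rfl⟩
  have hNtop : N = ⊤ := by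
    rcases hsimple N with h | h
    · exfalso
      rw [h] at hwN
      exact hw0 (LieSubmodule.mem_bot w |>.mp hwN)
    · exact h
  refine ⟨nw + 2, ?_⟩
  intro t ht m
  have ht' : n₀ + 1 ≤ t := by
    have h1 : n₀ ≤ (nw : ℤ) + 1 := max_le (by omega) (by omega)
    push_cast at ht
    omega
  have hmN : m ∈ Submodule.span ℂ Mon := by
    have : m ∈ N := by rw [hNtop]; trivial
    exact this
  induction hmN using Submodule.span_induction with
  | mem v hvm =>
    obtain ⟨L, rfl⟩ := hvm
    constructor
    · simpa using DHVaux.main_nilp B hdd hdh hhh hcen n₀ hn₀ w hw' t ht' L true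
    · simpa using DHVaux.main_nilp B hdd hdh hhh hcen n₀ hn₀ w hw' t ht' L false
  | zero =>
    exact ⟨⟨0, rfl⟩, ⟨0, rfl⟩⟩
  | add a b _ _ ha hb =>
    obtain ⟨⟨k1, hk1⟩, ⟨k1', hk1'⟩⟩ := ha
    obtain ⟨⟨k2, hk2⟩, ⟨k2', hk2'⟩⟩ := hb
    constructor
    · refine ⟨max k1 k2, ?_⟩
      rw [DHVaux.iter_lie_add,
        DHVaux.iter_lie_stable _ a k1 (max k1 k2) hk1 (le_max_left _ _),
        DHVaux.iter_lie_stable _ b k2 (max k1 k2) hk2 (le_max_right _ _), add_zero]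
    · refine ⟨max k1' k2', ?_⟩
      rw [DHVaux.iter_lie_add,
        DHVaux.iter_lie_stable _ a k1' (max k1' k2') hk1' (le_max_left _ _),
        DHVaux.iter_lie_stable _ b k2' (max k1' k2') hk2' (le_max_right _ _), add_zero]
  | smul a z _ hz =>
    obtain ⟨⟨k1, hk1⟩, ⟨k1', hk1'⟩⟩ := hz
    exact ⟨⟨k1, by rw [DHVaux.iter_lie_smul, hk1, smul_zero]⟩,
      ⟨k1', by rw [DHVaux.iter_lie_smul, hk1', smul_zero]⟩⟩
end

section
/- Let S be a simple L-module on which h_0 acts as a nonzero scalar. Suppose there exists t ∈ ℤ₊ such that the actions of d_i and h_i on S are locally finite for all i ≥ t, and let v ∈ S be a nonzero eigenvector of d_t with d_t v = λv. Then for every j > t, the subspaces Σ_{m∈ℤ₊} ℂ h_{j+mt} v and Σ_{m∈ℤ₊} ℂ d_{j+mt} v are finite-dimensional; more precisely, h_{j+mt}v ∈ U(ℂd_t)h_j v and d_{j+mt}v ∈ U(ℂd_t)d_j v + U(ℂd_t)h_j v for all m ∈ ℤ₊. -/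
/-- Let `S` be a simple `L`-module on which `h₀` acts as a nonzero scalar and
on which `dᵢ, hᵢ` act locally finitely for `i ≥ t`, and let `v ≠ 0` be an
eigenvector of `d_t`.  Then for each `j > t` and `m ≥ 0` one has
`h_{j+mt} v ∈ U(ℂ d_t) h_j v` and `d_{j+mt} v ∈ U(ℂ d_t) d_j v + U(ℂ d_t) h_j v`;
in particular `Σ_m ℂ h_{j+mt} v` and `Σ_m ℂ d_{j+mt} v` are finite-dimensional. -/
theorem dhv_locally_finite_estimates
 {g : Type*} [LieRing g] [LieAlgebra ℂ g]
    (B : Module.Basis DHVIdx ℂ g)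
    (hdd : ∀ m n : ℤ, ⁅B (DHVIdx.d m), B (DHVIdx.d n)⁆ =
      ((m - n : ℤ) : ℂ) • B (DHVIdx.d (m + n)) +
      ((m - n : ℤ) : ℂ) • B (DHVIdx.h (m + n)) +
      (if m + n = 0 then ((m : ℂ) ^ 3 - (m : ℂ)) / 12 else 0) • B DHVIdx.c)
    (hdh : ∀ m n : ℤ, ⁅B (DHVIdx.d m), B (DHVIdx.h n)⁆ =
      ((-n : ℤ) : ℂ) • B (DHVIdx.h (m + n)))
    (hhh : ∀ m n : ℤ, ⁅B (DHVIdx.h m), B (DHVIdx.h n)⁆ = 0)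
    (hcen : ∀ x : g, ⁅x, B DHVIdx.c⁆ = 0)
    (S : Type*) [AddCommGroup S] [Module ℂ S] [LieRingModule g S]
    [LieModule ℂ g S]
    (hsimple : ∀ N : LieSubmodule ℂ g S, N = ⊥ ∨ N = ⊤) (hnt : Nontrivial S)
    (mu : ℂ) (hmu : mu ≠ 0) (hh0 : ∀ s : S, ⁅B (DHVIdx.h 0), s⁆ = mu • s)
    (t : ℕ)
    (hlf : ∀ i : ℤ, (t : ℤ) ≤ i → ∀ s : S,
      FiniteDimensional ℂ (Submodule.span ℂ (Set.range fun n : ℕ =>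
        (fun w : S => ⁅B (DHVIdx.d i), w⁆)^[n] s)) ∧
      FiniteDimensional ℂ (Submodule.span ℂ (Set.range fun n : ℕ =>
        (fun w : S => ⁅B (DHVIdx.h i), w⁆)^[n] s)))
    (v : S) (hv : v ≠ 0) (lam : ℂ)
    (heig : ⁅B (DHVIdx.d t), v⁆ = lam • v) :
    ∀ j : ℤ, (t : ℤ) < j → ∀ Nd Nh : Submodule ℂ S,
      Nd = Submodule.span ℂ (Set.range fun n : ℕ =>
        (fun w : S => ⁅B (DHVIdx.d t), w⁆)^[n] ⁅B (DHVIdx.d j), v⁆) →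
      Nh = Submodule.span ℂ (Set.range fun n : ℕ =>
        (fun w : S => ⁅B (DHVIdx.d t), w⁆)^[n] ⁅B (DHVIdx.h j), v⁆) →
      (∀ m : ℕ, ⁅B (DHVIdx.h (j + m * t)), v⁆ ∈ Nh) ∧
      (∀ m : ℕ, ⁅B (DHVIdx.d (j + m * t)), v⁆ ∈ Nd ⊔ Nh) ∧
      FiniteDimensional ℂ (Submodule.span ℂ
        (Set.range fun m : ℕ => ⁅B (DHVIdx.h (j + m * t)), v⁆)) ∧
      FiniteDimensional ℂ (Submodule.span ℂ
        (Set.range fun m : ℕ => ⁅B (DHVIdx.d (j + m * t)), v⁆)) := by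
  intro j hj Nd Nh hNd hNh
  subst hNd; subst hNh
  have hj0 : 0 < j := lt_of_le_of_lt (Int.natCast_nonneg t) hj
  -- closure of iterate spans under bracketing with d_t
  have hinv : ∀ (s : S) (x : S),
      x ∈ Submodule.span ℂ (Set.range fun n : ℕ =>
        (fun w : S => ⁅B (DHVIdx.d t), w⁆)^[n] s) →
      ⁅B (DHVIdx.d t), x⁆ ∈ Submodule.span ℂ (Set.range fun n : ℕ =>
        (fun w : S => ⁅B (DHVIdx.d t), w⁆)^[n] s) := by
    intro s x hx
    induction hx using Submodule.span_induction with
    | mem y hy =>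
        obtain ⟨n, rfl⟩ := hy
        exact Submodule.subset_span
          ⟨n + 1, Function.iterate_succ_apply' (fun w : S => ⁅B (DHVIdx.d t), w⁆) n s⟩
    | zero => simpa using Submodule.zero_mem _
    | add a b _ _ ha hb => simpa [lie_add] using Submodule.add_mem _ ha hb
    | smul c a _ ha => simpa [lie_smul] using Submodule.smul_mem _ c ha
  -- recurrences
  have hrecH : ∀ n : ℤ, ⁅B (DHVIdx.d t), ⁅B (DHVIdx.h n), v⁆⁆ =
      ((-n : ℤ) : ℂ) • ⁅B (DHVIdx.h ((t : ℤ) + n)), v⁆ + lam • ⁅B (DHVIdx.h n), v⁆ := by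
    intro n
    have h1 := lie_lie (B (DHVIdx.d t)) (B (DHVIdx.h n)) v
    rw [hdh, heig] at h1
    simp only [smul_lie, lie_smul] at h1
    exact (sub_eq_iff_eq_add.mp h1.symm)
  have hrecD : ∀ n : ℤ, (t : ℤ) + n ≠ 0 → ⁅B (DHVIdx.d t), ⁅B (DHVIdx.d n), v⁆⁆ =
      (((t : ℤ) - n : ℤ) : ℂ) • ⁅B (DHVIdx.d ((t : ℤ) + n)), v⁆ +
      (((t : ℤ) - n : ℤ) : ℂ) • ⁅B (DHVIdx.h ((t : ℤ) + n)), v⁆ +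
      lam • ⁅B (DHVIdx.d n), v⁆ := by
    intro n hn
    have h1 := lie_lie (B (DHVIdx.d t)) (B (DHVIdx.d n)) v
    rw [hdd, heig] at h1
    simp only [if_neg hn, zero_smul, add_zero, add_lie, smul_lie, lie_smul] at h1
    exact (sub_eq_iff_eq_add.mp h1.symm)
  -- membership claims
  have memH : ∀ m : ℕ, ⁅B (DHVIdx.h (j + (m : ℤ) * (t : ℤ))), v⁆ ∈
      Submodule.span ℂ (Set.range fun n : ℕ =>
        (fun w : S => ⁅B (DHVIdx.d t), w⁆)^[n] ⁅B (DHVIdx.h j), v⁆) := by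
    intro m
    induction m with
    | zero =>
        refine Submodule.subset_span ⟨0, ?_⟩
        norm_num
    | succ m ih =>
        have hmt : (0 : ℤ) ≤ (m : ℤ) * (t : ℤ) := by positivity
        have hn0 : j + (m : ℤ) * (t : ℤ) ≠ 0 := by linarith
        have hidx : (t : ℤ) + (j + (m : ℤ) * (t : ℤ)) = j + ((m : ℕ) + 1 : ℕ) * (t : ℤ) := by
          push_cast; ring
        have hrec := hrecH (j + (m : ℤ) * (t : ℤ))
        rw [hidx] at hrec
        have hc : ((-(j + (m : ℤ) * (t : ℤ)) : ℤ) : ℂ) ≠ 0 := by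
          rw [Int.cast_ne_zero]
          omega
        have h3 : ((-(j + (m : ℤ) * (t : ℤ)) : ℤ) : ℂ) •
            ⁅B (DHVIdx.h (j + ((m : ℕ) + 1 : ℕ) * (t : ℤ))), v⁆ =
            ⁅B (DHVIdx.d t), ⁅B (DHVIdx.h (j + (m : ℤ) * (t : ℤ))), v⁆⁆ -
            lam • ⁅B (DHVIdx.h (j + (m : ℤ) * (t : ℤ))), v⁆ := by
          rw [hrec]; abel
        have hmem : ((-(j + (m : ℤ) * (t : ℤ)) : ℤ) : ℂ) •
            ⁅B (DHVIdx.h (j + ((m : ℕ) + 1 : ℕ) * (t : ℤ))), v⁆ ∈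
            Submodule.span ℂ (Set.range fun n : ℕ =>
              (fun w : S => ⁅B (DHVIdx.d t), w⁆)^[n] ⁅B (DHVIdx.h j), v⁆) := by
          rw [h3]
          exact Submodule.sub_mem _ (hinv _ _ ih) (Submodule.smul_mem _ _ ih)
        have := Submodule.smul_mem _ (((-(j + (m : ℤ) * (t : ℤ)) : ℤ) : ℂ))⁻¹ hmem
        rwa [inv_smul_smul₀ hc] at this
  have hinvSup : ∀ x : S, x ∈ (Submodule.span ℂ (Set.range fun n : ℕ =>
        (fun w : S => ⁅B (DHVIdx.d t), w⁆)^[n] ⁅B (DHVIdx.d j), v⁆) ⊔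
      Submodule.span ℂ (Set.range fun n : ℕ =>
        (fun w : S => ⁅B (DHVIdx.d t), w⁆)^[n] ⁅B (DHVIdx.h j), v⁆)) →
      ⁅B (DHVIdx.d t), x⁆ ∈ (Submodule.span ℂ (Set.range fun n : ℕ =>
        (fun w : S => ⁅B (DHVIdx.d t), w⁆)^[n] ⁅B (DHVIdx.d j), v⁆) ⊔
      Submodule.span ℂ (Set.range fun n : ℕ =>
        (fun w : S => ⁅B (DHVIdx.d t), w⁆)^[n] ⁅B (DHVIdx.h j), v⁆)) := by
    intro x hx
    obtain ⟨y, hy, z, hz, rfl⟩ := Submodule.mem_sup.mp hx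
    rw [lie_add]
    exact Submodule.add_mem _ (Submodule.mem_sup_left (hinv _ _ hy))
      (Submodule.mem_sup_right (hinv _ _ hz))
  have memD : ∀ m : ℕ, ⁅B (DHVIdx.d (j + (m : ℤ) * (t : ℤ))), v⁆ ∈
      (Submodule.span ℂ (Set.range fun n : ℕ =>
        (fun w : S => ⁅B (DHVIdx.d t), w⁆)^[n] ⁅B (DHVIdx.d j), v⁆) ⊔
      Submodule.span ℂ (Set.range fun n : ℕ =>
        (fun w : S => ⁅B (DHVIdx.d t), w⁆)^[n] ⁅B (DHVIdx.h j), v⁆)) := by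
    intro m
    induction m with
    | zero =>
        refine Submodule.mem_sup_left (Submodule.subset_span ⟨0, ?_⟩)
        norm_num
    | succ m ih =>
        have hmt : (0 : ℤ) ≤ (m : ℤ) * (t : ℤ) := by positivity
        have hn0 : (t : ℤ) + (j + (m : ℤ) * (t : ℤ)) ≠ 0 := by linarith
        have hidx : (t : ℤ) + (j + (m : ℤ) * (t : ℤ)) = j + ((m : ℕ) + 1 : ℕ) * (t : ℤ) := by
          push_cast; ring
        have hrec := hrecD (j + (m : ℤ) * (t : ℤ)) hn0
        rw [hidx] at hrec
        have hc : (((t : ℤ) - (j + (m : ℤ) * (t : ℤ)) : ℤ) : ℂ) ≠ 0 := by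
          rw [Int.cast_ne_zero]
          intro h
          linarith [hj]
        have h3 : (((t : ℤ) - (j + (m : ℤ) * (t : ℤ)) : ℤ) : ℂ) •
            ⁅B (DHVIdx.d (j + ((m : ℕ) + 1 : ℕ) * (t : ℤ))), v⁆ =
            ⁅B (DHVIdx.d t), ⁅B (DHVIdx.d (j + (m : ℤ) * (t : ℤ))), v⁆⁆ -
            lam • ⁅B (DHVIdx.d (j + (m : ℤ) * (t : ℤ))), v⁆ -
            (((t : ℤ) - (j + (m : ℤ) * (t : ℤ)) : ℤ) : ℂ) •
            ⁅B (DHVIdx.h (j + ((m : ℕ) + 1 : ℕ) * (t : ℤ))), v⁆ := by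
          rw [hrec]; abel
        have hmem : (((t : ℤ) - (j + (m : ℤ) * (t : ℤ)) : ℤ) : ℂ) •
            ⁅B (DHVIdx.d (j + ((m : ℕ) + 1 : ℕ) * (t : ℤ))), v⁆ ∈
            (Submodule.span ℂ (Set.range fun n : ℕ =>
              (fun w : S => ⁅B (DHVIdx.d t), w⁆)^[n] ⁅B (DHVIdx.d j), v⁆) ⊔
            Submodule.span ℂ (Set.range fun n : ℕ =>
              (fun w : S => ⁅B (DHVIdx.d t), w⁆)^[n] ⁅B (DHVIdx.h j), v⁆)) := by
          rw [h3]
          exact Submodule.sub_mem _ (Submodule.sub_mem _ (hinvSup _ ih)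
            (Submodule.smul_mem _ _ ih))
            (Submodule.smul_mem _ _ (Submodule.mem_sup_right (memH (m + 1))))
        have := Submodule.smul_mem _ ((((t : ℤ) - (j + (m : ℤ) * (t : ℤ)) : ℤ) : ℂ))⁻¹ hmem
        rwa [inv_smul_smul₀ hc] at this
  refine ⟨memH, memD, ?_, ?_⟩
  · have finNh : FiniteDimensional ℂ (Submodule.span ℂ (Set.range fun n : ℕ =>
        (fun w : S => ⁅B (DHVIdx.d t), w⁆)^[n] ⁅B (DHVIdx.h j), v⁆)) :=
      (hlf (t : ℤ) le_rfl ⁅B (DHVIdx.h j), v⁆).1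
    refine Submodule.finiteDimensional_of_le (S₂ := Submodule.span ℂ (Set.range fun n : ℕ =>
        (fun w : S => ⁅B (DHVIdx.d t), w⁆)^[n] ⁅B (DHVIdx.h j), v⁆)) ?_
    rw [Submodule.span_le]
    rintro _ ⟨m, rfl⟩
    exact memH m
  · have finNd : FiniteDimensional ℂ (Submodule.span ℂ (Set.range fun n : ℕ =>
        (fun w : S => ⁅B (DHVIdx.d t), w⁆)^[n] ⁅B (DHVIdx.d j), v⁆)) :=
      (hlf (t : ℤ) le_rfl ⁅B (DHVIdx.d j), v⁆).1
    have finNh : FiniteDimensional ℂ (Submodule.span ℂ (Set.range fun n : ℕ =>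
        (fun w : S => ⁅B (DHVIdx.d t), w⁆)^[n] ⁅B (DHVIdx.h j), v⁆)) :=
      (hlf (t : ℤ) le_rfl ⁅B (DHVIdx.h j), v⁆).1
    have finSup : FiniteDimensional ℂ ((Submodule.span ℂ (Set.range fun n : ℕ =>
        (fun w : S => ⁅B (DHVIdx.d t), w⁆)^[n] ⁅B (DHVIdx.d j), v⁆)) ⊔
        (Submodule.span ℂ (Set.range fun n : ℕ =>
        (fun w : S => ⁅B (DHVIdx.d t), w⁆)^[n] ⁅B (DHVIdx.h j), v⁆)) : Submodule ℂ S) :=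
      Submodule.finiteDimensional_sup _ _
    refine Submodule.finiteDimensional_of_le (S₂ := (Submodule.span ℂ (Set.range fun n : ℕ =>
        (fun w : S => ⁅B (DHVIdx.d t), w⁆)^[n] ⁅B (DHVIdx.d j), v⁆)) ⊔
        (Submodule.span ℂ (Set.range fun n : ℕ =>
        (fun w : S => ⁅B (DHVIdx.d t), w⁆)^[n] ⁅B (DHVIdx.h j), v⁆))) ?_
    rw [Submodule.span_le]
    rintro _ ⟨m, rfl⟩
    exact memD m
end
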